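/- The set of global minimizers of L(u) = c̃ g(u) − η̃ h(u)² − E_t[φ_t(g(u))] over u ∈ ℝᵈ is exactly Θ* = {± √(1 + σ²/‖Ae‖²) e} + ker(A). -/

import Mathlib

set_option linter.all false
open Matrix MeasureTheory

lemma intble_of_bound {f : ℝ → ℝ} (hf : Measurable f) (C : ℝ)
    (hC : ∀ t ∈ Set.Icc (0:ℝ) 1, |f t| ≤ C) :
    IntervalIntegrable f MeasureTheory.volume 0 1 := by
  rw [intervalIntegrable_iff_integrableOn_Ioc_of_le zero_le_one]
  apply MeasureTheory.Integrable.mono' (MeasureTheory.integrable_const C)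
    hf.aestronglyMeasurable.restrict
  rw [MeasureTheory.ae_restrict_iff' measurableSet_Ioc]
  exact MeasureTheory.ae_of_all _ fun t ht => hC t (Set.Ioc_subset_Icc_self ht)

lemma cs_eq {n : ℕ} {a c : Fin n → ℝ} (hc : c ⬝ᵥ c ≠ 0)
    (heq : (c ⬝ᵥ a)^2 = (c ⬝ᵥ c) * (a ⬝ᵥ a)) :
    a = ((c ⬝ᵥ a) / (c ⬝ᵥ c)) • c := by
  have h0 : ((c ⬝ᵥ c) • a - (c ⬝ᵥ a) • c) ⬝ᵥ ((c ⬝ᵥ c) • a - (c ⬝ᵥ a) • c) = 0 := by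
    simp only [dotProduct_sub, sub_dotProduct, dotProduct_smul,
      smul_dotProduct, smul_eq_mul, dotProduct_comm a c]
    linear_combination (-(c ⬝ᵥ c)) * heq
  have h1 : (c ⬝ᵥ c) • a = (c ⬝ᵥ a) • c :=
    sub_eq_zero.mp (dotProduct_self_eq_zero.mp h0)
  funext i
  have h2 := congrFun h1 i
  simp only [Pi.smul_apply, smul_eq_mul] at h2 ⊢
  field_simp
  linear_combination h2

set_option maxHeartbeats 1000000 in
/-- The set of global minimizers of
`L(u) = c̃ g(u) − η̃ h(u)² − E_t[φ_t(g(u))]` over `u ∈ ℝᵈ` is exactly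
`Θ* = {± √(1 + σ²/‖Ae‖²) e} + ker(A)`. -/
theorem stmt_15 {m d : ℕ} (A : Matrix (Fin m) (Fin d) ℝ) (hrank : A.rank = m)
    (e : Fin d → ℝ) (he : e ⬝ᵥ e = 1) (hAe : A.mulVec e ≠ 0)
    (σ σmin σmax : ℝ) (hσ : 0 < σ) (hσmin : 0 < σmin)
    (σt : ℝ → ℝ) (hmeas : Measurable σt)
    (hbound : ∀ t ∈ Set.Icc (0 : ℝ) 1, σmin ≤ σt t ∧ σt t ≤ σmax)
    (g h : (Fin d → ℝ) → ℝ) (φ : ℝ → ℝ → ℝ) (ctil ηtil : ℝ) (L : (Fin d → ℝ) → ℝ)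
    (hg : g = fun u => u ⬝ᵥ (Aᵀ * A).mulVec u)
    (hh : h = fun u => e ⬝ᵥ (Aᵀ * A).mulVec u)
    (hφ : φ = fun t x => x / (σt t ^ 2 * (σt t ^ 2 + x)))
    (hctil : ctil = ∫ t in (0 : ℝ)..1, ((σt t ^ 2 + σ ^ 2) ^ 2)⁻¹)
    (hηtil : ηtil = ∫ t in (0 : ℝ)..1,
        (2 * (σt t ^ 2 + σ ^ 2) + (A.mulVec e) ⬝ᵥ (A.mulVec e)) /
          ((σt t ^ 2 + σ ^ 2) ^ 2 *
            (σt t ^ 2 + σ ^ 2 + (A.mulVec e) ⬝ᵥ (A.mulVec e)) ^ 2))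
    (hL : L = fun u => ctil * g u - ηtil * (h u) ^ 2 - ∫ t in (0 : ℝ)..1, φ t (g u)) :
    {u : Fin d → ℝ | ∀ v : Fin d → ℝ, L u ≤ L v} =
      {u : Fin d → ℝ | ∃ q : Fin d → ℝ, A.mulVec q = 0 ∧
        (u = q + Real.sqrt (1 + σ ^ 2 / ((A.mulVec e) ⬝ᵥ (A.mulVec e))) • e ∨
         u = q - Real.sqrt (1 + σ ^ 2 / ((A.mulVec e) ⬝ᵥ (A.mulVec e))) • e)} := by
  clear hrank he
  set b : Fin m → ℝ := A.mulVec e with hb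
  set β : ℝ := b ⬝ᵥ b with hbeta
  have hβnn : 0 ≤ β := Finset.sum_nonneg fun i _ => mul_self_nonneg _
  have hβ : 0 < β := lt_of_le_of_ne hβnn
    (fun hc => hAe (dotProduct_self_eq_zero.mp hc.symm))
  set r : ℝ := Real.sqrt (1 + σ ^ 2 / β) with hr
  have hr2 : r ^ 2 = 1 + σ ^ 2 / β := Real.sq_sqrt (by positivity)
  -- g and h as dot products of A-images
  have hg' : ∀ u, g u = (A.mulVec u) ⬝ᵥ (A.mulVec u) := by
    intro u
    rw [hg]
    simp only [← Matrix.mulVec_mulVec, Matrix.dotProduct_mulVec, Matrix.vecMul_transpose]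
  have hh' : ∀ u, h u = b ⬝ᵥ (A.mulVec u) := by
    intro u
    rw [hh, hb]
    simp only [← Matrix.mulVec_mulVec, Matrix.dotProduct_mulVec, Matrix.vecMul_transpose]
  have hgnn : ∀ u, 0 ≤ g u := by
    intro u; rw [hg']; exact Finset.sum_nonneg fun i _ => mul_self_nonneg _
  have hCS : ∀ u, (h u) ^ 2 ≤ β * g u := by
    intro u
    set a := A.mulVec u
    have h0 : 0 ≤ (β • a - (b ⬝ᵥ a) • b) ⬝ᵥ (β • a - (b ⬝ᵥ a) • b) :=
      Finset.sum_nonneg fun i _ => mul_self_nonneg _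
    simp only [dotProduct_sub, sub_dotProduct, dotProduct_smul,
      smul_dotProduct, smul_eq_mul, dotProduct_comm a b] at h0
    rw [hg', hh']
    nlinarith [h0, hβ]
  have hσmax : 0 < σmax := by
    have h0 := hbound 0 ⟨le_refl 0, zero_le_one⟩
    linarith
  -- basic positivity for t in [0,1]
  have hs2 : ∀ t ∈ Set.Icc (0:ℝ) 1, σmin^2 ≤ σt t ^ 2 ∧ σt t ^ 2 ≤ σmax ^ 2 := by
    intro t ht
    obtain ⟨h1, h2⟩ := hbound t ht
    constructor
    · nlinarith
    · nlinarith
  -- integrand pieces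
  set f1 : ℝ → ℝ := fun t => ((σt t ^ 2 + σ ^ 2) ^ 2)⁻¹ with hf1
  set f2 : ℝ → ℝ := fun t =>
      (2 * (σt t ^ 2 + σ ^ 2) + β) / ((σt t ^ 2 + σ ^ 2) ^ 2 * (σt t ^ 2 + σ ^ 2 + β) ^ 2)
    with hf2
  have hms : Measurable (fun t => σt t ^ 2) := hmeas.pow_const 2
  have I1 : IntervalIntegrable f1 MeasureTheory.volume 0 1 := by
    apply intble_of_bound (by fun_prop) ((σ^2)^2)⁻¹
    intro t ht
    rw [abs_of_nonneg (by positivity)]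
    apply inv_anti₀ (by positivity)
    nlinarith [(hs2 t ht).1, hσmin]
  have I2 : IntervalIntegrable f2 MeasureTheory.volume 0 1 := by
    apply intble_of_bound (by fun_prop)
      ((2 * (σmax ^ 2 + σ ^ 2) + β) / ((σ ^ 2) ^ 2 * (σ ^ 2) ^ 2))
    intro t ht
    obtain ⟨hl, hu⟩ := hs2 t ht
    rw [abs_of_nonneg (by positivity)]
    apply div_le_div₀ (by positivity) (by nlinarith) (by positivity)
    have e1 : σ ^ 2 ≤ σt t ^ 2 + σ ^ 2 := by nlinarith [sq_nonneg (σt t)]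
    have e2 : σ ^ 2 ≤ σt t ^ 2 + σ ^ 2 + β := by nlinarith [sq_nonneg (σt t)]
    exact mul_le_mul (pow_le_pow_left₀ (by positivity) e1 2)
      (pow_le_pow_left₀ (by positivity) e2 2) (by positivity) (by positivity)
  have I3 : ∀ x : ℝ, 0 ≤ x →
      IntervalIntegrable (fun t => φ t x) MeasureTheory.volume 0 1 := by
    intro x hx
    rw [hφ]
    apply intble_of_bound (by fun_prop) (x / (σmin ^ 2 * σmin ^ 2))
    intro t ht
    obtain ⟨hl, hu⟩ := hs2 t ht
    rw [abs_of_nonneg (by positivity)]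
    apply div_le_div₀ hx (le_refl x) (by positivity)
    nlinarith [hσmin, hx]
  -- decomposition of L as a single integral
  have hLdec : ∀ u, L u =
      ∫ t in (0:ℝ)..1, (f1 t * g u - f2 t * (h u) ^ 2 - φ t (g u)) := by
    intro u
    rw [hL]
    simp only
    rw [hctil, hηtil, ← intervalIntegral.integral_mul_const,
      ← intervalIntegral.integral_mul_const,
      ← intervalIntegral.integral_sub (I1.mul_const _) (I2.mul_const _),
      ← intervalIntegral.integral_sub ((I1.mul_const _).sub (I2.mul_const _))
        (I3 _ (hgnn u))]
  set xs : ℝ := β + σ ^ 2 with hxs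
  set us : (Fin d → ℝ) := r • e with hus
  have hrb : r ^ 2 * β = β + σ ^ 2 := by rw [hr2]; field_simp
  have hAus : A.mulVec us = r • b := by
    rw [hus, hb, Matrix.mulVec_smul]
  have hgus : g us = xs := by
    rw [hg' us, hAus, hxs]
    simp only [smul_dotProduct, dotProduct_smul, smul_eq_mul, ← hbeta]
    linear_combination hrb
  have hhus : (h us) ^ 2 = β * xs := by
    rw [hh' us, hAus, hxs]
    simp only [dotProduct_smul, smul_eq_mul, ← hbeta]
    linear_combination β * hrb
  -- master inequality
  have hmaster : ∀ u : Fin d → ℝ,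
      (g u - xs) ^ 2 * (((σmax ^ 2 + σ ^ 2 + β) ^ 2 * (σmax ^ 2 + g u))⁻¹)
        + (β * g u - (h u) ^ 2) * (β / ((σmax ^ 2 + σ ^ 2) ^ 2 * (σmax ^ 2 + σ ^ 2 + β) ^ 2))
      ≤ L u - L us := by
    intro u
    have hx0 : 0 ≤ g u := hgnn u
    have hIu : IntervalIntegrable (fun t => f1 t * g u - f2 t * (h u) ^ 2 - φ t (g u))
        MeasureTheory.volume 0 1 :=
      ((I1.mul_const _).sub (I2.mul_const _)).sub (I3 _ hx0)
    have hIus : IntervalIntegrable (fun t => f1 t * xs - f2 t * (β * xs) - φ t xs)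
        MeasureTheory.volume 0 1 :=
      ((I1.mul_const _).sub (I2.mul_const _)).sub (I3 xs (by rw [hxs]; positivity))
    have hLus : L us = ∫ t in (0:ℝ)..1, (f1 t * xs - f2 t * (β * xs) - φ t xs) := by
      rw [hLdec us]
      simp only [hgus, hhus]
    have hdiff : L u - L us = ∫ t in (0:ℝ)..1,
        ((f1 t * g u - f2 t * (h u) ^ 2 - φ t (g u))
          - (f1 t * xs - f2 t * (β * xs) - φ t xs)) := by
      rw [intervalIntegral.integral_sub hIu hIus, ← hLdec u, ← hLus]
    have hint : (∫ _t in (0:ℝ)..1,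
        ((g u - xs) ^ 2 * (((σmax ^ 2 + σ ^ 2 + β) ^ 2 * (σmax ^ 2 + g u))⁻¹)
          + (β * g u - (h u) ^ 2) * (β / ((σmax ^ 2 + σ ^ 2) ^ 2 * (σmax ^ 2 + σ ^ 2 + β) ^ 2))))
        = (g u - xs) ^ 2 * (((σmax ^ 2 + σ ^ 2 + β) ^ 2 * (σmax ^ 2 + g u))⁻¹)
          + (β * g u - (h u) ^ 2) * (β / ((σmax ^ 2 + σ ^ 2) ^ 2 * (σmax ^ 2 + σ ^ 2 + β) ^ 2)) := by
      simp
    rw [hdiff, ← hint]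
    apply intervalIntegral.integral_mono_on zero_le_one intervalIntegrable_const
      (hIu.sub hIus)
    intro t ht
    obtain ⟨hl, hu2⟩ := hs2 t ht
    have hsp : 0 < σt t ^ 2 := lt_of_lt_of_le (by positivity) hl
    have hc : 0 < σt t ^ 2 + σ ^ 2 := by positivity
    have hK : 0 < σt t ^ 2 + σ ^ 2 + β := by linarith
    have hsx : 0 < σt t ^ 2 + g u := by linarith
    have hsxs : 0 < σt t ^ 2 + (β + σ ^ 2) := by linarith
    have hCmax : 0 < σmax ^ 2 + σ ^ 2 := by positivity
    have hKmax : 0 < σmax ^ 2 + σ ^ 2 + β := by linarith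
    have hxmax : 0 < σmax ^ 2 + g u := by positivity
    have hne1 : σt t ^ 2 ≠ 0 := hsp.ne'
    have hne2 : σt t ^ 2 + σ ^ 2 ≠ 0 := hc.ne'
    have hne3 : σt t ^ 2 + σ ^ 2 + β ≠ 0 := hK.ne'
    have hne4 : σt t ^ 2 + g u ≠ 0 := hsx.ne'
    have hne5 : σt t ^ 2 + (β + σ ^ 2) ≠ 0 := hsxs.ne'
    have hid : (f1 t * g u - f2 t * (h u) ^ 2 - φ t (g u))
          - (f1 t * xs - f2 t * (β * xs) - φ t xs)
        = (g u - xs) ^ 2 / ((σt t ^ 2 + σ ^ 2 + β) ^ 2 * (σt t ^ 2 + g u))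
          + (β * g u - (h u) ^ 2) *
            ((2 * (σt t ^ 2 + σ ^ 2) + β) / ((σt t ^ 2 + σ ^ 2) ^ 2 * (σt t ^ 2 + σ ^ 2 + β) ^ 2)) := by
      simp only [hf1, hf2, hφ, hxs]
      have key := fun (s σ β g h : ℝ) (hne1 : s ≠ 0) (hne2 : s + σ^2 ≠ 0) (hne3 : s + σ^2 + β ≠ 0) (hne4 : s + g ≠ 0) (hne5 : s + (β + σ^2) ≠ 0) => (show (((s + σ^2)^2)⁻¹ * g - (2*(s+σ^2)+β)/((s+σ^2)^2*(s+σ^2+β)^2) * h^2 - g/(s*(s+g))) - (((s + σ^2)^2)⁻¹ * (β+σ^2) - (2*(s+σ^2)+β)/((s+σ^2)^2*(s+σ^2+β)^2) * (β*(β+σ^2)) - (β+σ^2)/(s*(s+(β+σ^2)))) = (g - (β+σ^2))^2/((s+σ^2+β)^2*(s+g)) + (β*g-h^2)*((2*(s+σ^2)+β)/((s+σ^2)^2*(s+σ^2+β)^2)) by field_simp; ring)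
      exact key _ _ _ _ _ hne1 hne2 hne3 hne4 hne5
    rw [hid]
    have hE : 0 ≤ β * g u - (h u) ^ 2 := by nlinarith [hCS u]
    have hb1 : (g u - xs) ^ 2 * (((σmax ^ 2 + σ ^ 2 + β) ^ 2 * (σmax ^ 2 + g u))⁻¹)
        ≤ (g u - xs) ^ 2 / ((σt t ^ 2 + σ ^ 2 + β) ^ 2 * (σt t ^ 2 + g u)) := by
      rw [← div_eq_mul_inv]
      apply div_le_div_of_nonneg_left (sq_nonneg _) (mul_pos (pow_pos hK 2) hsx)
      exact mul_le_mul (pow_le_pow_left₀ hK.le (by linarith) 2) (by linarith) hsx.le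
        (by positivity)
    have hb2 : (β * g u - (h u) ^ 2) * (β / ((σmax ^ 2 + σ ^ 2) ^ 2 * (σmax ^ 2 + σ ^ 2 + β) ^ 2))
        ≤ (β * g u - (h u) ^ 2) *
            ((2 * (σt t ^ 2 + σ ^ 2) + β) / ((σt t ^ 2 + σ ^ 2) ^ 2 * (σt t ^ 2 + σ ^ 2 + β) ^ 2)) := by
      apply mul_le_mul_of_nonneg_left _ hE
      apply div_le_div₀ (by positivity) (by linarith) (mul_pos (pow_pos hc 2) (pow_pos hK 2))
      exact mul_le_mul (pow_le_pow_left₀ hc.le (by linarith) 2)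
        (pow_le_pow_left₀ hK.le (by linarith) 2) (by positivity) (by positivity)
    exact add_le_add hb1 hb2
  -- minimality of L at us
  have hLge : ∀ v, L us ≤ L v := by
    intro v
    have hm := hmaster v
    have h1 : 0 ≤ (g v - xs) ^ 2 * (((σmax ^ 2 + σ ^ 2 + β) ^ 2 * (σmax ^ 2 + g v))⁻¹) :=
      mul_nonneg (sq_nonneg _) (inv_nonneg.mpr (mul_nonneg (by positivity)
        (by nlinarith [hgnn v])))
    have h2 : 0 ≤ (β * g v - (h v) ^ 2) * (β / ((σmax ^ 2 + σ ^ 2) ^ 2 * (σmax ^ 2 + σ ^ 2 + β) ^ 2)) :=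
      mul_nonneg (by nlinarith [hCS v]) (by positivity)
    linarith
  ext u
  simp only [Set.mem_setOf_eq]
  constructor
  · intro hu
    have heq : L u = L us := le_antisymm (hu us) (hLge u)
    have hm := hmaster u
    have hδ1 : 0 < ((σmax ^ 2 + σ ^ 2 + β) ^ 2 * (σmax ^ 2 + g u))⁻¹ :=
      inv_pos.mpr (mul_pos (by positivity) (by nlinarith [hgnn u]))
    have hδ2 : 0 < β / ((σmax ^ 2 + σ ^ 2) ^ 2 * (σmax ^ 2 + σ ^ 2 + β) ^ 2) := by positivity
    have hE : 0 ≤ β * g u - (h u) ^ 2 := by nlinarith [hCS u]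
    rw [heq, sub_self] at hm
    have ht1 : 0 ≤ (g u - xs) ^ 2 * (((σmax ^ 2 + σ ^ 2 + β) ^ 2 * (σmax ^ 2 + g u))⁻¹) :=
      mul_nonneg (sq_nonneg _) hδ1.le
    have ht2 : 0 ≤ (β * g u - (h u) ^ 2) *
        (β / ((σmax ^ 2 + σ ^ 2) ^ 2 * (σmax ^ 2 + σ ^ 2 + β) ^ 2)) :=
      mul_nonneg hE hδ2.le
    have hz1 : (g u - xs) ^ 2 * (((σmax ^ 2 + σ ^ 2 + β) ^ 2 * (σmax ^ 2 + g u))⁻¹) = 0 :=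
      le_antisymm (by linarith) ht1
    have hz2 : (β * g u - (h u) ^ 2) *
        (β / ((σmax ^ 2 + σ ^ 2) ^ 2 * (σmax ^ 2 + σ ^ 2 + β) ^ 2)) = 0 :=
      le_antisymm (by linarith) ht2
    have hgeq : g u = xs := by
      rcases mul_eq_zero.mp hz1 with hzz | hzz
      · have := sq_eq_zero_iff.mp hzz
        linarith
      · exact absurd hzz hδ1.ne'
    have hheq : (h u) ^ 2 = β * g u := by
      rcases mul_eq_zero.mp hz2 with hzz | hzz
      · linarith
      · exact absurd hzz hδ2.ne'
    -- Cauchy-Schwarz equality case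
    have hcs : A.mulVec u = ((b ⬝ᵥ A.mulVec u) / β) • b := by
      apply cs_eq hβ.ne'
      rw [← hbeta, ← hh' u, ← hg' u]
      rw [hheq]
    set lam : ℝ := (b ⬝ᵥ A.mulVec u) / β with hlamdef
    have hlamh : lam = h u / β := by rw [hlamdef, hh' u]
    have hlam2 : lam ^ 2 = r ^ 2 := by
      rw [hlamh, hr2]
      have h3 : (h u) ^ 2 = β * (β + σ ^ 2) := by rw [hheq, hgeq, hxs]
      field_simp
      linear_combination h3
    have hfac : (lam - r) * (lam + r) = 0 := by linear_combination hlam2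
    rcases mul_eq_zero.mp hfac with hcase | hcase
    · refine ⟨u - r • e, ?_, Or.inl (by abel)⟩
      rw [Matrix.mulVec_sub, Matrix.mulVec_smul, ← hb, hcs]
      rw [show lam = r from by linarith [hcase]]
      simp
    · refine ⟨u + r • e, ?_, Or.inr (by abel)⟩
      rw [Matrix.mulVec_add, Matrix.mulVec_smul, ← hb, hcs]
      rw [show lam = -r from by linarith [hcase]]
      simp
  · rintro ⟨q, hq, hcase⟩ v
    have hAu : A.mulVec u = r • b ∨ A.mulVec u = (-r) • b := by
      rcases hcase with h1 | h1
      · left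
        rw [h1, Matrix.mulVec_add, Matrix.mulVec_smul, hq, ← hb]
        simp
      · right
        rw [h1, Matrix.mulVec_sub, Matrix.mulVec_smul, hq, ← hb]
        simp [neg_smul]
    have hgu : g u = xs ∧ (h u) ^ 2 = β * xs := by
      rcases hAu with h1 | h1 <;>
        (rw [hg' u, hh' u, h1, hxs]
         simp only [smul_dotProduct, dotProduct_smul, smul_eq_mul, ← hbeta]
         constructor
         · linear_combination hrb
         · linear_combination β * hrb)
    have hLu : L u = L us := by
      rw [hLdec u, hLdec us]
      simp only [hgu.1, hgu.2, hgus, hhus]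
    rw [hLu]
    exact hLge v
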